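/- Let 𝕜 be a field, ι a nonempty finite index type, (V_j)_{j∈ι} a family of 𝕜-vector spaces, v ∈ ⨂_{j∈ι} V_j, and r : ι → ℕ. Then the following are equivalent: (a) dim U_j(v) = r(j) for every j ∈ ι; (b) there exist, for each j ∈ ι, a linearly independent family u^{(j)} : Fin r(j) → V_j and a coefficient tensor C : (Π_{j∈ι} Fin r(j)) → 𝕜 such that v = Σ_{i} C(i) • (⨂_{j∈ι} u^{(j)}_{i(j)}), and for every j ∈ ι the j-th matricization M_j(C), the matrix indexed by Fin r(j) × (Π_{k≠j} Fin r(k)) with entry C at the combined multi-index, has rank r(j). Moreover, when (a) holds, each family u^{(j)} can be taken to be a basis of U_j(v), and for fixed linearly independent families u^{(j)} the coefficient tensor C representing v is unique. -/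

import Mathlib

open scoped TensorProduct

section
variable {ι : Type*} [Fintype ι] [deq : DecidableEq ι] {𝕜 : Type*} [Field 𝕜]
  {V : ι → Type*} [∀ i, AddCommGroup (V i)] [∀ i, Module 𝕜 (V i)]

/-- The multilinear map `(m_i)_{i} ↦ (∏_{k ≠ j} φ_k (m_k)) • m_j`. -/
def contractML (j : ι) (φ : ∀ k, V k →ₗ[𝕜] 𝕜) : MultilinearMap 𝕜 V (V j) where
  toFun m := (∏ k ∈ Finset.univ.erase j, φ k (m k)) • m j
  map_update_add' := by
    intro inst m k x y
    have h : inst = deq := Subsingleton.elim _ _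
    subst h
    try dsimp only
    rcases eq_or_ne k j with rfl | hkj
    · have hprod : ∀ z : V k,
          (∏ i ∈ Finset.univ.erase k, φ i (Function.update m k z i))
            = ∏ i ∈ Finset.univ.erase k, φ i (m i) := fun z =>
        Finset.prod_congr rfl fun i hi => by
          rw [Function.update_of_ne (Finset.ne_of_mem_erase hi)]
      rw [hprod, hprod, hprod, Function.update_self, Function.update_self,
        Function.update_self, smul_add]
    · have hmem : k ∈ Finset.univ.erase j := Finset.mem_erase.2 ⟨hkj, Finset.mem_univ k⟩
      have hprod : ∀ z : V k,
          (∏ i ∈ Finset.univ.erase j, φ i (Function.update m k z i))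
            = φ k z * ∏ i ∈ (Finset.univ.erase j) \ {k}, φ i (m i) := by
        intro z
        have h1 : ∀ i, φ i (Function.update m k z i)
            = Function.update (fun i => φ i (m i)) k (φ k z) i := fun i =>
          Function.apply_update (fun i v => φ i v) m k z i
        rw [Finset.prod_congr rfl (fun i _ => h1 i)]
        exact Finset.prod_update_of_mem hmem _ _
      have hj : ∀ z : V k, Function.update m k z j = m j := fun z =>
        Function.update_of_ne (Ne.symm hkj) _ _
      rw [hprod, hprod, hprod, hj, hj, hj, map_add, add_mul, add_smul]
  map_update_smul' := by
    intro inst m k c x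
    have h : inst = deq := Subsingleton.elim _ _
    subst h
    try dsimp only
    rcases eq_or_ne k j with rfl | hkj
    · have hprod : ∀ z : V k,
          (∏ i ∈ Finset.univ.erase k, φ i (Function.update m k z i))
            = ∏ i ∈ Finset.univ.erase k, φ i (m i) := fun z =>
        Finset.prod_congr rfl fun i hi => by
          rw [Function.update_of_ne (Finset.ne_of_mem_erase hi)]
      rw [hprod, hprod, Function.update_self, Function.update_self, smul_comm]
    · have hmem : k ∈ Finset.univ.erase j := Finset.mem_erase.2 ⟨hkj, Finset.mem_univ k⟩
      have hprod : ∀ z : V k,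
          (∏ i ∈ Finset.univ.erase j, φ i (Function.update m k z i))
            = φ k z * ∏ i ∈ (Finset.univ.erase j) \ {k}, φ i (m i) := by
        intro z
        have h1 : ∀ i, φ i (Function.update m k z i)
            = Function.update (fun i => φ i (m i)) k (φ k z) i := fun i =>
          Function.apply_update (fun i v => φ i v) m k z i
        rw [Finset.prod_congr rfl (fun i _ => h1 i)]
        exact Finset.prod_update_of_mem hmem _ _
      have hj : ∀ z : V k, Function.update m k z j = m j := fun z =>
        Function.update_of_ne (Ne.symm hkj) _ _
      rw [hprod, hprod, hj, hj, map_smul, smul_eq_mul, mul_assoc, mul_smul]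

/-- The contraction `id_j ⊗ φ : ⨂ᵢ Vᵢ → V j` obtained by lifting the multilinear map
`(m_i)ᵢ ↦ (∏_{k ≠ j} φ_k (m_k)) • m_j`. -/
noncomputable def contract (j : ι) (φ : ∀ k, V k →ₗ[𝕜] 𝕜) :
    (⨂[𝕜] i, V i) →ₗ[𝕜] V j :=
  PiTensorProduct.lift (contractML j φ)

/-- The `j`-th minimal subspace of a tensor `v`. -/
noncomputable def minimalSubspace (j : ι) (v : ⨂[𝕜] i, V i) : Submodule 𝕜 (V j) :=
  Submodule.span 𝕜 {x | ∃ φ : ∀ k, V k →ₗ[𝕜] 𝕜, contract j φ v = x}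


/-- The `j`-th matricization of a coefficient tensor `C`: the matrix with rows indexed by
`Fin (r j)` and columns indexed by the remaining multi-indices, whose entry is `C` at the
combined multi-index. -/
noncomputable def matricize (r : ι → ℕ) (j : ι) (C : (∀ k, Fin (r k)) → 𝕜) :
    Matrix (Fin (r j)) (∀ k : {k : ι // k ≠ j}, Fin (r k.1)) 𝕜 :=
  fun a b => C fun k => if h : k = j then Fin.cast (by rw [h]) a else b ⟨k, h⟩


namespace TuckerAux

open Finset

variable {ι : Type*} [Fintype ι] [deq : DecidableEq ι] {𝕜 : Type*} [Field 𝕜]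
  {V : ι → Type*} [∀ i, AddCommGroup (V i)] [∀ i, Module 𝕜 (V i)]

lemma contract_tprod (j : ι) (φ : ∀ k, V k →ₗ[𝕜] 𝕜) (x : ∀ k, V k) :
    contract j φ (PiTensorProduct.tprod 𝕜 x)
      = (∏ k ∈ Finset.univ.erase j, φ k (x k)) • x j :=
  PiTensorProduct.lift.tprod x

/-- The full contraction `⨂ᵢ Vᵢ → 𝕜`. -/
noncomputable def fullContract (φ : ∀ k, V k →ₗ[𝕜] 𝕜) : (⨂[𝕜] i, V i) →ₗ[𝕜] 𝕜 :=
  PiTensorProduct.lift ((MultilinearMap.mkPiAlgebra 𝕜 ι 𝕜).compLinearMap φ)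

lemma fullContract_tprod (φ : ∀ k, V k →ₗ[𝕜] 𝕜) (x : ∀ k, V k) :
    fullContract φ (PiTensorProduct.tprod 𝕜 x) = ∏ k, φ k (x k) := by
  rw [fullContract, PiTensorProduct.lift.tprod]
  simp

lemma prod_ite_eq_ite_forall {α : Type*} [Fintype α] (p : α → Prop) [DecidablePred p]
    [Decidable (∀ a, p a)] :
    (∏ a, if p a then (1 : 𝕜) else 0) = if (∀ a, p a) then 1 else 0 := by
  by_cases h : ∀ a, p a
  · rw [if_pos h]
    exact Finset.prod_eq_one fun a _ => if_pos (h a)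
  · rw [if_neg h]
    push_neg at h
    obtain ⟨a, ha⟩ := h
    exact Finset.prod_eq_zero (Finset.mem_univ a) (if_neg ha)

lemma exists_dual {W : Type*} [AddCommGroup W] [Module 𝕜 W] {n : ℕ} {u : Fin n → W}
    (hu : LinearIndependent 𝕜 u) :
    ∃ ε : Fin n → (W →ₗ[𝕜] 𝕜), ∀ a b, ε a (u b) = if b = a then (1 : 𝕜) else 0 := by
  classical
  have hs : LinearIndepOn 𝕜 id (Set.range u) := (linearIndepOn_id_range_iff hu.injective).mpr hu
  let B := Module.Basis.extend hs
  have hmem : ∀ a, u a ∈ hs.extend (Set.subset_univ _) :=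
    fun a => hs.subset_extend _ ⟨a, rfl⟩
  refine ⟨fun a => B.coord ⟨u a, hmem a⟩, fun a b => ?_⟩
  have hB : ∀ c, B ⟨u c, hmem c⟩ = u c := fun c => Module.Basis.extend_apply_self hs _
  rw [Module.Basis.coord_apply, ← hB b, B.repr_self, Finsupp.single_apply]
  by_cases h : b = a
  · subst h; rw [if_pos rfl, if_pos rfl]
  · rw [if_neg h, if_neg]
    intro hba
    exact h (hu.injective (by simpa [Subtype.ext_iff] using hba))

lemma contract_mem (j : ι) (φ : ∀ k, V k →ₗ[𝕜] 𝕜) (v : ⨂[𝕜] i, V i) :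
    contract j φ v ∈ minimalSubspace j v :=
  Submodule.subset_span ⟨φ, rfl⟩

lemma exists_fin_tprod [Nonempty ι] (v : ⨂[𝕜] i, V i) :
    ∃ (n : ℕ) (x : Fin n → ∀ k, V k), v = ∑ s, PiTensorProduct.tprod 𝕜 (x s) := by
  induction v using PiTensorProduct.induction_on with
  | smul_tprod c f =>
      obtain ⟨j₀⟩ := ‹Nonempty ι›
      refine ⟨1, fun _ => Function.update f j₀ (c • f j₀), ?_⟩
      rw [Fin.sum_univ_one, (PiTensorProduct.tprod 𝕜).map_update_smul, Function.update_eq_self]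
  | add a b ha hb =>
      obtain ⟨n, x, hx⟩ := ha
      obtain ⟨m, y, hy⟩ := hb
      refine ⟨n + m, Fin.append x y, ?_⟩
      rw [Fin.sum_univ_add, hx, hy]
      simp [Fin.append_left, Fin.append_right]

lemma piSplitAt_symm_same {β : ι → Type*} (j : ι) (a : β j)
    (b : ∀ k : {k : ι // k ≠ j}, β k.1) :
    (Equiv.piSplitAt j β).symm (a, b) j = a := by
  simp [Equiv.piSplitAt]

lemma piSplitAt_symm_ne {β : ι → Type*} (j k : ι) (h : k ≠ j) (a : β j)
    (b : ∀ k : {k : ι // k ≠ j}, β k.1) :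
    (Equiv.piSplitAt j β).symm (a, b) k = b ⟨k, h⟩ := by
  simp [Equiv.piSplitAt, h]

lemma matricize_apply {r : ι → ℕ} (C : (∀ k, Fin (r k)) → 𝕜) (j : ι) (i : ∀ k, Fin (r k)) :
    matricize r j C (i j) (fun k => i k.1) = C i := by
  unfold matricize
  congr 1
  funext k
  by_cases h : k = j
  · subst h
    simp
  · simp [h]

lemma matricize_symm_apply {r : ι → ℕ} (C : (∀ k, Fin (r k)) → 𝕜) (j : ι)
    (a : Fin (r j)) (b : ∀ k : {k : ι // k ≠ j}, Fin (r k.1)) :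
    C ((Equiv.piSplitAt j (fun k => Fin (r k))).symm (a, b)) = matricize r j C a b := by
  have h1 : (Equiv.piSplitAt j (fun k => Fin (r k))).symm (a, b) j = a :=
    piSplitAt_symm_same (β := fun k => Fin (r k)) j a b
  have h2 : (fun k : {k : ι // k ≠ j} =>
      (Equiv.piSplitAt j (fun k => Fin (r k))).symm (a, b) k.1) = b := by
    funext k
    rw [piSplitAt_symm_ne (β := fun k => Fin (r k)) j k.1 k.2 a b]
  rw [← matricize_apply C j ((Equiv.piSplitAt j (fun k => Fin (r k))).symm (a, b)), h1, h2]

lemma finrank_minimal_eq_rank {r : ι → ℕ} (v : ⨂[𝕜] j, V j) (u : ∀ j, Fin (r j) → V j)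
    (C : (∀ j, Fin (r j)) → 𝕜) (hu : ∀ j, LinearIndependent 𝕜 (u j))
    (hv : v = ∑ i : ∀ j, Fin (r j), C i • (PiTensorProduct.tprod 𝕜 fun j => u j (i j)))
    (j : ι) : Module.finrank 𝕜 (minimalSubspace j v) = (matricize r j C).rank := by
  classical
  set M := matricize r j C with hM
  set L : (Fin (r j) → 𝕜) →ₗ[𝕜] V j := Fintype.linearCombination 𝕜 (u j) with hL
  have hLapp : ∀ c, L c = ∑ a, c a • u j a := fun c => Fintype.linearCombination_apply (R := 𝕜) (v := u j) c
  have hLinj : Function.Injective L := by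
    rw [← LinearMap.ker_eq_bot]
    apply (Submodule.eq_bot_iff _).mpr
    intro c hc
    rw [LinearMap.mem_ker, hLapp] at hc
    exact funext (Fintype.linearIndependent_iff.mp (hu j) c hc)
  have hcontract : ∀ φ : ∀ k, V k →ₗ[𝕜] 𝕜,
      contract j φ v
        = L (M.mulVec fun b => ∏ k : {k : ι // k ≠ j}, φ k.1 (u k.1 (b k))) := by
    intro φ
    set w : (∀ k : {k : ι // k ≠ j}, Fin (r k.1)) → 𝕜 :=
      fun b => ∏ k : {k : ι // k ≠ j}, φ k.1 (u k.1 (b k)) with hw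
    rw [hv, map_sum]
    have hterm : ∀ i : ∀ k, Fin (r k),
        contract j φ (C i • PiTensorProduct.tprod 𝕜 fun k => u k (i k))
          = (C i * ∏ k ∈ Finset.univ.erase j, φ k (u k (i k))) • u j (i j) := by
      intro i
      rw [map_smul, contract_tprod, smul_smul]
    rw [Finset.sum_congr rfl fun i _ => hterm i]
    rw [← Equiv.sum_comp (Equiv.piSplitAt j (fun k => Fin (r k))).symm
      (fun i => (C i * ∏ k ∈ Finset.univ.erase j, φ k (u k (i k))) • u j (i j))]
    rw [Fintype.sum_prod_type]
    have hinner : ∀ (a : Fin (r j)) (b : ∀ k : {k : ι // k ≠ j}, Fin (r k.1)),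
        (C ((Equiv.piSplitAt j (fun k => Fin (r k))).symm (a, b)) *
          ∏ k ∈ Finset.univ.erase j,
            φ k (u k ((Equiv.piSplitAt j (fun k => Fin (r k))).symm (a, b) k))) •
          u j ((Equiv.piSplitAt j (fun k => Fin (r k))).symm (a, b) j)
        = (M a b * w b) • u j a := by
      intro a b
      rw [piSplitAt_symm_same (β := fun k => Fin (r k)) j a b, matricize_symm_apply C j a b]
      congr 2
      rw [hw]
      rw [Finset.prod_subtype (p := fun k => k ≠ j) (Finset.univ.erase j)
        (fun k => by simp [Finset.mem_erase])
        (fun k => φ k (u k ((Equiv.piSplitAt j (fun k => Fin (r k))).symm (a, b) k)))]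
      refine Finset.prod_congr rfl fun k _ => ?_
      rw [piSplitAt_symm_ne (β := fun k => Fin (r k)) j k.1 k.2 a b]
    rw [Finset.sum_congr rfl fun a _ => Finset.sum_congr rfl fun b _ => hinner a b]
    rw [hLapp]
    refine Finset.sum_congr rfl fun a _ => ?_
    rw [← Finset.sum_smul]
    congr 1
  have hsub : minimalSubspace j v = Submodule.map L (LinearMap.range M.mulVecLin) := by
    apply le_antisymm
    · rw [minimalSubspace]
      apply Submodule.span_le.mpr
      rintro _ ⟨φ, rfl⟩
      rw [hcontract φ]
      exact ⟨M.mulVec _, ⟨_, rfl⟩, rfl⟩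
    · rw [Matrix.range_mulVecLin, Submodule.map_span]
      apply Submodule.span_le.mpr
      rintro _ ⟨_, ⟨b, rfl⟩, rfl⟩
      choose ε hε using fun k => exists_dual (hu k)
      set φ : ∀ k, V k →ₗ[𝕜] 𝕜 :=
        fun k => if h : k = j then 0 else ε k (b ⟨k, h⟩) with hφ
      have hw : (fun b' => ∏ k : {k : ι // k ≠ j}, φ k.1 (u k.1 (b' k)))
          = Pi.single b (1 : 𝕜) := by
        funext b'
        have : ∀ k : {k : ι // k ≠ j}, φ k.1 (u k.1 (b' k))
            = if b' k = b k then (1 : 𝕜) else 0 := by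
          intro k
          rw [hφ]
          simp only [dif_neg k.2]
          have := hε k.1 (b ⟨k.1, k.2⟩) (b' k)
          simpa using this
        rw [Finset.prod_congr rfl fun k _ => this k, prod_ite_eq_ite_forall,
          Pi.single_apply]
        congr 1
        rw [eq_iff_iff]
        constructor
        · intro h; funext k; exact h k
        · intro h k; rw [h]
      have hcv := hcontract φ
      rw [hw, Matrix.mulVec_single_one] at hcv
      exact hcv ▸ contract_mem j φ v
  rw [hsub, Matrix.rank]
  exact (LinearEquiv.finrank_eq (Submodule.equivMapOfInjective L hLinj _)).symm

lemma coeff_unique {r : ι → ℕ} (u : ∀ j, Fin (r j) → V j)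
    (hu : ∀ j, LinearIndependent 𝕜 (u j)) (C C' : (∀ j, Fin (r j)) → 𝕜)
    (h : (∑ i : ∀ j, Fin (r j), C i • (PiTensorProduct.tprod 𝕜 fun j => u j (i j)))
        = (∑ i : ∀ j, Fin (r j), C' i • (PiTensorProduct.tprod 𝕜 fun j => u j (i j)))) :
    C = C' := by
  classical
  choose ε hε using fun k => exists_dual (hu k)
  funext i₀
  have key : ∀ D : (∀ j, Fin (r j)) → 𝕜,
      fullContract (fun k => ε k (i₀ k))
        (∑ i : ∀ j, Fin (r j), D i • (PiTensorProduct.tprod 𝕜 fun j => u j (i j))) = D i₀ := by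
    intro D
    rw [map_sum]
    have hterm : ∀ i : ∀ j, Fin (r j),
        fullContract (fun k => ε k (i₀ k))
          (D i • (PiTensorProduct.tprod 𝕜 fun j => u j (i j)))
        = if i = i₀ then D i else 0 := by
      intro i
      rw [map_smul, fullContract_tprod]
      rw [Finset.prod_congr rfl fun k _ => hε k (i₀ k) (i k), prod_ite_eq_ite_forall]
      rw [smul_eq_mul]
      by_cases hii : i = i₀
      · rw [if_pos hii, if_pos (fun k => congrFun hii k), mul_one]
      · rw [if_neg hii, if_neg, mul_zero]
        intro hk
        exact hii (funext hk)
    rw [Finset.sum_congr rfl fun i _ => hterm i, Finset.sum_ite_eq' Finset.univ i₀ D,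
      if_pos (Finset.mem_univ _)]
  rw [← key C, ← key C', h]

lemma exists_good_repr [Nonempty ι] {r : ι → ℕ} (v : ⨂[𝕜] j, V j)
    (hr : ∀ j, Module.finrank 𝕜 (minimalSubspace j v) = r j) :
    ∃ (u : ∀ j, Fin (r j) → V j) (C : (∀ j, Fin (r j)) → 𝕜),
      (∀ j, LinearIndependent 𝕜 (u j)) ∧
      (∀ j, Submodule.span 𝕜 (Set.range (u j)) = minimalSubspace j v) ∧
      v = ∑ i : ∀ j, Fin (r j), C i • (PiTensorProduct.tprod 𝕜 fun j => u j (i j)) := by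
  classical
  obtain ⟨n, x, hx⟩ := exists_fin_tprod v
  have hfd : ∀ j, FiniteDimensional 𝕜 (minimalSubspace j v) := by
    intro j
    have hle : minimalSubspace j v ≤ Submodule.span 𝕜 (Set.range fun s => x s j) := by
      apply Submodule.span_le.mpr
      rintro _ ⟨φ, rfl⟩
      rw [hx, map_sum]
      apply Submodule.sum_mem
      intro s _
      rw [contract_tprod]
      exact Submodule.smul_mem _ _ (Submodule.subset_span ⟨s, rfl⟩)
    have : FiniteDimensional 𝕜 (Submodule.span 𝕜 (Set.range fun s => x s j)) :=
      FiniteDimensional.span_of_finite _ (Set.finite_range _)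
    exact Submodule.finiteDimensional_of_le hle
  let bW : ∀ j, Module.Basis (Fin (r j)) 𝕜 (minimalSubspace j v) :=
    fun j => Module.finBasisOfFinrankEq 𝕜 _ (hr j)
  let u : ∀ j, Fin (r j) → V j := fun j a => (bW j a : V j)
  have hu : ∀ j, LinearIndependent 𝕜 (u j) := fun j =>
    (bW j).linearIndependent.map' (minimalSubspace j v).subtype
      (Submodule.ker_subtype _)
  have hspan : ∀ j, Submodule.span 𝕜 (Set.range (u j)) = minimalSubspace j v := by
    intro j
    have h1 : Set.range (u j) = (minimalSubspace j v).subtype '' Set.range (bW j) := by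
      rw [← Set.range_comp]; rfl
    rw [h1, ← Submodule.map_span, (bW j).span_eq, Submodule.map_top,
      Submodule.range_subtype]
  have hsubT : ∀ j, LinearIndepOn 𝕜 id (Set.range (u j)) :=
    fun j => (linearIndepOn_id_range_iff (hu j).injective).mpr (hu j)
  let B : ∀ j, Module.Basis ((hsubT j).extend (Set.subset_univ _)) 𝕜 (V j) :=
    fun j => Module.Basis.extend (hsubT j)
  let idx : ∀ j, Fin (r j) → ((hsubT j).extend (Set.subset_univ _)) :=
    fun j a => ⟨u j a, (hsubT j).subset_extend _ ⟨a, rfl⟩⟩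
  have hBidx : ∀ j a, B j (idx j a) = u j a := fun j a => Module.Basis.extend_apply_self _ _
  have hidxinj : ∀ j, Function.Injective (idx j) := by
    intro j a a' h
    exact (hu j).injective (by simpa [idx, Subtype.ext_iff] using h)
  let A : ∀ j, Finset ((hsubT j).extend (Set.subset_univ _)) :=
    fun j => Finset.univ.biUnion fun s => ((B j).repr (x s j)).support
  let F : Finset (∀ k, (hsubT k).extend (Set.subset_univ _)) := Fintype.piFinset A
  let D : (∀ k, (hsubT k).extend (Set.subset_univ _)) → 𝕜 :=
    fun M => ∑ s, ∏ k, (B k).repr (x s k) (M k)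
  have hxk : ∀ s k, x s k = ∑ c ∈ A k, (B k).repr (x s k) c • B k c := by
    intro s k
    conv_lhs => rw [← (B k).linearCombination_repr (x s k)]
    rw [Finsupp.linearCombination_apply]
    exact Finsupp.sum_of_support_subset _
      (fun c hc => Finset.mem_biUnion.mpr ⟨s, Finset.mem_univ s, hc⟩) _
      (fun c _ => zero_smul _ _)
  have hvF : v = ∑ M ∈ F, D M • PiTensorProduct.tprod 𝕜 (fun k => B k (M k)) := by
    rw [hx]
    have hstep : ∀ s, PiTensorProduct.tprod 𝕜 (x s)
        = ∑ M ∈ F, (∏ k, (B k).repr (x s k) (M k)) •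
            PiTensorProduct.tprod 𝕜 (fun k => B k (M k)) := by
      intro s
      conv_lhs => rw [show x s = fun k => ∑ c ∈ A k, (B k).repr (x s k) c • B k c from
        funext (hxk s)]
      rw [MultilinearMap.map_sum_finset]
      exact Finset.sum_congr rfl fun M hM => MultilinearMap.map_smul_univ _ _ _
    rw [Finset.sum_congr rfl fun s _ => hstep s, Finset.sum_comm]
    refine Finset.sum_congr rfl fun M _ => ?_
    rw [← Finset.sum_smul]
  have hD0 : ∀ M, M ∉ F → D M = 0 := by
    intro M hM
    rw [Fintype.mem_piFinset] at hM
    push_neg at hM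
    obtain ⟨k, hk⟩ := hM
    apply Finset.sum_eq_zero
    intro s _
    apply Finset.prod_eq_zero (Finset.mem_univ k)
    by_contra hne
    exact hk (Finset.mem_biUnion.mpr ⟨s, Finset.mem_univ s,
      Finsupp.mem_support_iff.mpr hne⟩)
  have hvanish : ∀ M : ∀ k, (hsubT k).extend (Set.subset_univ _),
      (∃ j, M j ∉ Set.range (idx j)) → D M = 0 := by
    rintro M ⟨j, hj⟩
    by_cases hMF : M ∈ F
    swap
    · exact hD0 M hMF
    set φ : ∀ k, V k →ₗ[𝕜] 𝕜 := fun k => (B k).coord (M k) with hφ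
    have hc : contract j φ v
        = ∑ M' ∈ F, (D M' *
            ∏ k ∈ Finset.univ.erase j, (if M' k = M k then (1 : 𝕜) else 0)) • B j (M' j) := by
      rw [hvF, map_sum]
      refine Finset.sum_congr rfl fun M' _ => ?_
      rw [map_smul, contract_tprod, smul_smul]
      congr 2
      refine Finset.prod_congr rfl fun k _ => ?_
      rw [hφ, Module.Basis.coord_apply, Module.Basis.repr_self, Finsupp.single_apply]
    have hker : minimalSubspace j v ≤ LinearMap.ker ((B j).coord (M j)) := by
      rw [← hspan j]
      apply Submodule.span_le.mpr
      rintro _ ⟨a, rfl⟩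
      have : (B j).coord (M j) (u j a) = 0 := by
        rw [← hBidx j a, Module.Basis.coord_apply, Module.Basis.repr_self, Finsupp.single_apply, if_neg]
        intro hh
        exact hj ⟨a, hh⟩
      exact this
    have h0 : (B j).coord (M j) (contract j φ v) = 0 := hker (contract_mem j φ v)
    rw [hc, map_sum] at h0
    have hterm : ∀ M' ∈ F,
        ((B j).coord (M j)) ((D M' *
            ∏ k ∈ Finset.univ.erase j, (if M' k = M k then (1 : 𝕜) else 0)) • B j (M' j))
          = if M' = M then D M' else 0 := by
      intro M' _
      rw [map_smul, Module.Basis.coord_apply, Module.Basis.repr_self, Finsupp.single_apply]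
      rw [smul_eq_mul, mul_assoc, Finset.prod_erase_mul Finset.univ
        (fun k => if M' k = M k then (1 : 𝕜) else 0) (Finset.mem_univ j)]
      rw [prod_ite_eq_ite_forall]
      by_cases hMM : M' = M
      · rw [if_pos hMM, if_pos (fun k => congrFun hMM k), mul_one]
      · rw [if_neg hMM, if_neg, mul_zero]
        intro hk
        exact hMM (funext hk)
    rw [Finset.sum_congr rfl hterm, Finset.sum_ite_eq' F M D, if_pos hMF] at h0
    exact h0
  let emb : (∀ k, Fin (r k)) → (∀ k, (hsubT k).extend (Set.subset_univ _)) :=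
    fun i k => idx k (i k)
  have hembinj : Function.Injective emb := fun i i' h =>
    funext fun k => hidxinj k (congrFun h k)
  let G : Finset (∀ k, (hsubT k).extend (Set.subset_univ _)) :=
    Finset.image emb Finset.univ
  have hnotG : ∀ M, M ∉ G → ∃ j, M j ∉ Set.range (idx j) := by
    intro M hM
    by_contra h
    push_neg at h
    have h' : ∀ j, ∃ a, idx j a = M j := fun j => h j
    choose a ha using h'
    exact hM (Finset.mem_image.mpr ⟨a, Finset.mem_univ _, funext ha⟩)
  have hFG : ∑ M ∈ F, D M • PiTensorProduct.tprod 𝕜 (fun k => B k (M k))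
      = ∑ M ∈ G, D M • PiTensorProduct.tprod 𝕜 (fun k => B k (M k)) := by
    rw [Finset.sum_subset (Finset.subset_union_left : F ⊆ F ∪ G)
      (fun M _ hMF => by rw [hD0 M hMF, zero_smul])]
    rw [Finset.sum_subset (Finset.subset_union_right : G ⊆ F ∪ G)
      (fun M _ hMG => by rw [hvanish M (hnotG M hMG), zero_smul])]
  refine ⟨u, fun i => D (emb i), hu, hspan, ?_⟩
  rw [hvF, hFG, Finset.sum_image (fun i _ i' _ h => hembinj h)]
  refine Finset.sum_congr rfl fun i _ => ?_
  congr 1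
  exact congrArg _ (funext fun k => hBidx k (i k))

end TuckerAux

/-- **Characterization of tensors of fixed Tucker rank.**
For `v ∈ ⨂ⱼ Vⱼ` and `r : ι → ℕ`, the minimal subspaces satisfy `dim Uⱼ(v) = r j` for all
`j` iff `v` admits a representation `v = ∑ i, C i • ⨂ⱼ u^{(j)}_{i j}` with linearly
independent families `u^{(j)} : Fin (r j) → Vⱼ` and a coefficient tensor `C` all of whose
matricizations `M_j(C)` have full rank `r j`.  Moreover, the `u^{(j)}` can then be taken
to be bases of the `Uⱼ(v)`, and for fixed linearly independent families the coefficient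
tensor is unique. -/
theorem fixed_rank_tucker_characterization [Nonempty ι]
    (v : ⨂[𝕜] j, V j) (r : ι → ℕ) :
    ((∀ j, Module.finrank 𝕜 (minimalSubspace j v) = r j) ↔
      ∃ (u : ∀ j, Fin (r j) → V j) (C : (∀ j, Fin (r j)) → 𝕜),
        (∀ j, LinearIndependent 𝕜 (u j)) ∧
        v = ∑ i : ∀ j, Fin (r j), C i • (PiTensorProduct.tprod 𝕜 fun j => u j (i j)) ∧
        ∀ j, (matricize r j C).rank = r j) ∧
    ((∀ j, Module.finrank 𝕜 (minimalSubspace j v) = r j) →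
      ∃ (u : ∀ j, Fin (r j) → V j) (C : (∀ j, Fin (r j)) → 𝕜),
        (∀ j, LinearIndependent 𝕜 (u j)) ∧
        (∀ j, Submodule.span 𝕜 (Set.range (u j)) = minimalSubspace j v) ∧
        v = ∑ i : ∀ j, Fin (r j), C i • (PiTensorProduct.tprod 𝕜 fun j => u j (i j)) ∧
        ∀ j, (matricize r j C).rank = r j) ∧
    (∀ u : ∀ j, Fin (r j) → V j, (∀ j, LinearIndependent 𝕜 (u j)) →
      ∀ C C' : (∀ j, Fin (r j)) → 𝕜,
        (∑ i : ∀ j, Fin (r j), C i • (PiTensorProduct.tprod 𝕜 fun j => u j (i j)))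
          = (∑ i : ∀ j, Fin (r j), C' i • (PiTensorProduct.tprod 𝕜 fun j => u j (i j))) →
        C = C') := by
  classical
  have hkey := fun u C h1 h2 j => TuckerAux.finrank_minimal_eq_rank (r := r) v u C h1 h2 j
  have hex : (∀ j, Module.finrank 𝕜 (minimalSubspace j v) = r j) →
      ∃ (u : ∀ j, Fin (r j) → V j) (C : (∀ j, Fin (r j)) → 𝕜),
        (∀ j, LinearIndependent 𝕜 (u j)) ∧
        (∀ j, Submodule.span 𝕜 (Set.range (u j)) = minimalSubspace j v) ∧
        v = ∑ i : ∀ j, Fin (r j), C i • (PiTensorProduct.tprod 𝕜 fun j => u j (i j)) ∧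
        ∀ j, (matricize r j C).rank = r j := by
    intro h
    obtain ⟨u, C, h1, h2, h3⟩ := TuckerAux.exists_good_repr v h
    exact ⟨u, C, h1, h2, h3, fun j => by rw [← hkey u C h1 h3 j]; exact h j⟩
  refine ⟨⟨fun h => ?_, ?_⟩, hex, TuckerAux.coeff_unique⟩
  · obtain ⟨u, C, h1, h2, h3, h4⟩ := hex h
    exact ⟨u, C, h1, h3, h4⟩
  · rintro ⟨u, C, h1, h2, h3⟩ j
    rw [hkey u C h1 h2 j]
    exact h3 j

end
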